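/- Let G be a group acting on a connected simple graph Γ whose vertex set is V, and suppose there is a symmetric 'intersection number' function i : V × V → ℕ with i(u,v) = 0 iff u = v, such that two distinct vertices are adjacent iff i(u,v) = 4. Suppose further that for any two distinct non-adjacent vertices v, ṽ there is a unique vertex u adjacent to v with i(u, ṽ) < i(v, ṽ), and i(u, ṽ) < i(v', ṽ) for every other vertex v' adjacent to v, and at most one vertex v'' adjacent to v satisfies i(u,ṽ) < i(v'', ṽ) ≤ i(v, ṽ), in which case v'' is adjacent to u. Then the barycentric-subdivision-style graph Γ̃ obtained by replacing each triangle of Γ by the cone on its vertices (with cone point the barycenter), and where every edge of Γ lies in exactly one triangle, contains no nontrivial cycle, i.e. is a tree. -/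

import Mathlib

/-- A triangle of a simple graph: a 3-element vertex set, pairwise adjacent. -/
def IsTriangle {V : Type*} (Γ : SimpleGraph V) (t : Finset V) : Prop :=
  t.card = 3 ∧ ∀ u ∈ t, ∀ v ∈ t, u ≠ v → Γ.Adj u v

/-- The "spine" graph `Γ̃`: replace each triangle of `Γ` by the cone on its vertices,
with cone point the barycenter (a new vertex for each triangle), deleting the original
edges.  Vertices are the original vertices together with the barycenters; a vertex is
adjacent exactly to the barycenters of the triangles containing it. -/
def Subdiv {V : Type*} (Γ : SimpleGraph V) :
    SimpleGraph (V ⊕ {t : Finset V // IsTriangle Γ t}) where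
  Adj x y :=
    (∃ v t, x = Sum.inl v ∧ y = Sum.inr t ∧ v ∈ t.1) ∨
    (∃ v t, x = Sum.inr t ∧ y = Sum.inl v ∧ v ∈ t.1)
  symm := by
    constructor
    rintro x y (⟨v, t, rfl, rfl, h⟩ | ⟨v, t, rfl, rfl, h⟩)
    · exact Or.inr ⟨v, t, rfl, rfl, h⟩
    · exact Or.inl ⟨v, t, rfl, rfl, h⟩
  loopless := by
    constructor
    rintro x (⟨v, t, rfl, h, _⟩ | ⟨v, t, rfl, h, _⟩) <;> simp at h

section Aux

open SimpleGraph

/-- Reversal of a cycle is a cycle. -/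
private lemma isCycle_reverse {α : Type*} {G : SimpleGraph α} {u : α} {p : G.Walk u u}
    (h : p.IsCycle) : p.reverse.IsCycle := by
  refine ⟨⟨⟨?_⟩, ?_⟩, ?_⟩
  · rw [Walk.edges_reverse, List.nodup_reverse]
    exact h.edges_nodup
  · intro hnil
    apply h.ne_nil
    have := congrArg Walk.reverse hnil
    simpa using this
  · rw [Walk.support_reverse, List.tail_reverse, List.nodup_reverse]
    have hsupp := p.support_eq_cons
    have hlast := p.getLast_support
    have htail : p.support.tail.Nodup := h.support_nodup
    rcases ht : p.support.tail with _ | ⟨y, m⟩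
    · rw [hsupp, ht]; simp
    · rw [hsupp, ht]
      rw [ht] at htail
      have hlast? : (y :: m).getLast? = some u := by
        have h1 : p.support.getLast? = some u := by
          rw [List.getLast?_eq_getLast (by simp), p.getLast_support]
        rwa [hsupp, ht, List.getLast?_cons_cons] at h1
      rw [List.dropLast_cons₂, List.nodup_cons]
      constructor
      · intro hu
        have hsplit : (y :: m) = (y :: m).dropLast ++ [u] := by
          rw [List.dropLast_append_getLast? u hlast?]
        have hnd : ¬ (y :: m).Nodup := by
          rw [hsplit]
          intro hnd
          exact List.disjoint_of_nodup_append hnd hu (by simp)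
        exact hnd htail
      · exact htail.sublist (List.dropLast_sublist _)

private lemma mem_of_mem_rotate {α : Type*} [DecidableEq α] {G : SimpleGraph α} {u w : α} {c : G.Walk u u}
    (h : w ∈ c.support) {z : α} (hz : z ∈ (c.rotate _ h).support) : z ∈ c.support := by
  rw [(c.rotate _ h).support_eq_cons] at hz
  rcases List.mem_cons.mp hz with rfl | hz
  · exact h
  · have := (Walk.support_rotate c _ h).mem_iff.mp hz
    exact List.mem_of_mem_tail this

/-- Extraction of the first triangle and vertex of a cycle based at an original vertex. -/
private lemma extract_first {V : Type*} {Γ : SimpleGraph V} {v : V}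
    (c : (Subdiv Γ).Walk (Sum.inl v) (Sum.inl v)) (hc : c.IsCycle) :
    ∃ (a : V) (ta : {t : Finset V // IsTriangle Γ t}) (l : List _),
      Sum.inl a ∈ c.support ∧ v ≠ a ∧ v ∈ ta.1 ∧ a ∈ ta.1 ∧
      c.edges = s(Sum.inl v, Sum.inr ta) :: l := by
  cases c with
  | nil => exact absurd rfl hc.ne_nil
  | @cons _ x _ h p =>
    obtain ⟨t, rfl, hm⟩ : ∃ t, x = Sum.inr t ∧ v ∈ t.1 := by
      rcases h with ⟨v', t, hx, hy, hmm⟩ | ⟨v', t, hx, hy, hmm⟩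
      · have hvv : v = v' := by simpa using hx
        exact ⟨t, hy, hvv ▸ hmm⟩
      · exact absurd hx (by simp)
    cases p with
    | @cons _ y _ h2 q =>
      obtain ⟨a, rfl, hm2⟩ : ∃ a, y = Sum.inl a ∧ a ∈ t.1 := by
        rcases h2 with ⟨v', t', hx2, hy2, hmm2⟩ | ⟨v', t', hx2, hy2, hmm2⟩
        · exact absurd hx2 (by simp)
        · have htt : t' = t := by simpa [eq_comm] using hx2
          exact ⟨v', hy2, htt ▸ hmm2⟩
      refine ⟨a, t, s(Sum.inr t, Sum.inl a) :: q.edges, by simp, ?_, hm, hm2, by simp⟩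
      intro hva
      subst hva
      have hnd := hc.support_nodup
      simp only [Walk.support_cons, List.tail_cons] at hnd
      rw [List.nodup_cons] at hnd
      cases q with
      | nil =>
        have h3 := hc.three_le_length
        simp at h3
      | cons h3 q' =>
        rw [Walk.support_cons, List.nodup_cons] at hnd
        exact hnd.2.1 (Walk.end_mem_support q')

/-- The core combinatorial argument. -/
private lemma core {V : Type*} (Γ : SimpleGraph V) (i : V → V → ℕ)
    (hzero : ∀ u v, i u v = 0 ↔ u = v)
    (hadj : ∀ u v, Γ.Adj u v ↔ u ≠ v ∧ i u v = 4)
    (htri : ∀ u v, Γ.Adj u v →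
      ∃! t : {t : Finset V // IsTriangle Γ t}, u ∈ t.1 ∧ v ∈ t.1)
    (hdesc : ∀ v w : V, v ≠ w → ¬Γ.Adj v w →
      ∃ u : V, Γ.Adj v u ∧ i u w < i v w ∧
        (∀ v', Γ.Adj v v' → v' ≠ u → i u w < i v' w) ∧
        (∀ v₁ v₂, Γ.Adj v v₁ → Γ.Adj v v₂ →
          i u w < i v₁ w → i v₁ w ≤ i v w →
          i u w < i v₂ w → i v₂ w ≤ i v w → v₁ = v₂) ∧
        (∀ v'', Γ.Adj v v'' → i u w < i v'' w → i v'' w ≤ i v w → Γ.Adj v'' u))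
    (F : Finset V) (hF : F.Nonempty)
    (H : ∀ v ∈ F, ∃ (a b : V) (ta tb : {t : Finset V // IsTriangle Γ t}),
      a ∈ F ∧ b ∈ F ∧ v ≠ a ∧ v ≠ b ∧ ta ≠ tb ∧
      v ∈ ta.1 ∧ a ∈ ta.1 ∧ v ∈ tb.1 ∧ b ∈ tb.1) : False := by
  classical
  -- distinct non-adjacent vertices have intersection number at least 5
  have i_lower : ∀ n a b, i a b ≤ n → a ≠ b → ¬Γ.Adj a b → 5 ≤ i a b := by
    intro n
    induction n with
    | zero =>
      intro a b hle hne _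
      exact absurd ((hzero a b).mp (Nat.le_zero.mp hle)) hne
    | succ n ih =>
      intro a b hne hab hnadj
      by_contra hcon
      push_neg at hcon
      obtain ⟨u, hu, hlt, -, -, -⟩ := hdesc a b hab hnadj
      have hub : u ≠ b := fun h => hnadj (h ▸ hu)
      have hnub : ¬Γ.Adj u b := fun hA => by
        have := ((hadj u b).mp hA).2; omega
      have := ih u b (by omega) hub hnub
      omega
  have i_lower' : ∀ a b, a ≠ b → ¬Γ.Adj a b → 5 ≤ i a b := fun a b =>
    i_lower (i a b) a b le_rfl
  have tadj : ∀ (t : {t : Finset V // IsTriangle Γ t}) (u w : V),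
      u ∈ t.1 → w ∈ t.1 → u ≠ w → Γ.Adj u w := fun t u w hu hw hne =>
    t.2.2 u hu w hw hne
  -- if v,a,b are pairwise adjacent and ta, tb are triangles with v,a ∈ ta, v,b ∈ tb
  -- then ta = tb
  have triple : ∀ (v a b : V) (ta tb : {t : Finset V // IsTriangle Γ t}),
      Γ.Adj v a → Γ.Adj v b → Γ.Adj a b →
      v ∈ ta.1 → a ∈ ta.1 → v ∈ tb.1 → b ∈ tb.1 → ta ≠ tb → False := by
    intro v a b ta tb hva hvb hab hvta hata hvtb hbtb hne
    have hvna : v ≠ a := hva.ne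
    have hvnb : v ≠ b := hvb.ne
    have hanb : a ≠ b := hab.ne
    have hs : IsTriangle Γ ({v, a, b} : Finset V) := by
      constructor
      · rw [Finset.card_insert_of_notMem (by simp [hvna, hvnb]),
          Finset.card_insert_of_notMem (by simp [hanb])]
        simp
      · intro x hx y hy hxy
        simp only [Finset.mem_insert, Finset.mem_singleton] at hx hy
        rcases hx with rfl | rfl | rfl <;> rcases hy with rfl | rfl | rfl <;>
          first
            | exact absurd rfl hxy
            | exact hva
            | exact hvb
            | exact hab
            | exact hva.symm
            | exact hvb.symm
            | exact hab.symm
    obtain ⟨t0, _, hu0⟩ := htri v a hva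
    have e1 : ta = t0 := hu0 ta ⟨hvta, hata⟩
    have e2 : (⟨{v, a, b}, hs⟩ : {t : Finset V // IsTriangle Γ t}) = t0 :=
      hu0 _ ⟨by simp, by simp⟩
    obtain ⟨t1, _, hu1⟩ := htri v b hvb
    have e3 : tb = t1 := hu1 tb ⟨hvtb, hbtb⟩
    have e4 : (⟨{v, a, b}, hs⟩ : {t : Finset V // IsTriangle Γ t}) = t1 :=
      hu1 _ ⟨by simp, by simp⟩
    exact hne (by rw [e1, ← e2, e4, ← e3])
  -- take a pair maximizing i
  obtain ⟨⟨v, w⟩, hpmem, hmax⟩ :=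
    Finset.exists_max_image (F ×ˢ F) (fun p => i p.1 p.2) (hF.product hF)
  rw [Finset.mem_product] at hpmem
  obtain ⟨hv, hw⟩ := hpmem
  obtain ⟨a, b, ta, tb, ha, hb, hvna, hvnb, htane, hvta, hata, hvtb, hbtb⟩ := H v hv
  have hAdjva : Γ.Adj v a := tadj ta v a hvta hata hvna
  have hAdjvb : Γ.Adj v b := tadj tb v b hvtb hbtb hvnb
  by_cases hab : a = b
  · subst hab
    obtain ⟨t0, _, hu0⟩ := htri v a hAdjva
    exact htane ((hu0 ta ⟨hvta, hata⟩).trans (hu0 tb ⟨hvtb, hbtb⟩).symm)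
  · have h4 : 4 ≤ i v w := by
      have h := hmax (v, a) (Finset.mem_product.mpr ⟨hv, ha⟩)
      have := ((hadj v a).mp hAdjva).2
      simp only at h
      omega
    rcases Nat.lt_or_ge (i v w) 5 with h5 | h5
    · -- i v w = 4 : all pairs in F are adjacent
      have hiab : i a b ≤ i v w := hmax (a, b) (Finset.mem_product.mpr ⟨ha, hb⟩)
      have hAdjab : Γ.Adj a b := by
        by_contra hno
        have := i_lower' a b hab hno
        omega
      exact triple v a b ta tb hAdjva hAdjvb hAdjab hvta hata hvtb hbtb htane
    · have hvw : v ≠ w := by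
        intro h
        rw [(hzero v w).mpr h] at h4
        omega
      have hnadj : ¬Γ.Adj v w := fun hA => by
        have := ((hadj v w).mp hA).2; omega
      obtain ⟨u, huv, hult, h1, h2, h3⟩ := hdesc v w hvw hnadj
      have hale : i a w ≤ i v w := hmax (a, w) (Finset.mem_product.mpr ⟨ha, hw⟩)
      have hble : i b w ≤ i v w := hmax (b, w) (Finset.mem_product.mpr ⟨hb, hw⟩)
      by_cases hau : a = u <;> by_cases hbu : b = u
      · exact hab (hau.trans hbu.symm)
      · have h := h3 b hAdjvb (h1 b hAdjvb hbu) hble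
        have hAdjab : Γ.Adj a b := by rw [hau]; exact h.symm
        exact triple v a b ta tb hAdjva hAdjvb hAdjab hvta hata hvtb hbtb htane
      · have h := h3 a hAdjva (h1 a hAdjva hau) hale
        have hAdjab : Γ.Adj a b := by rw [hbu]; exact h
        exact triple v a b ta tb hAdjva hAdjvb hAdjab hvta hata hvtb hbtb htane
      · exact hab (h2 a b hAdjva hAdjvb (h1 a hAdjva hau) hale (h1 b hAdjvb hbu) hble)

end Aux

/-- Scharlemann–Akbas: if `Γ` is a connected graph with a `G`-action and a symmetric
intersection function `i` (vanishing exactly on the diagonal, with adjacency given by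
`i = 4`), every edge lies in a unique triangle, and the unique-descent property of
Proposition 4 holds, then the spine graph `Γ̃` is a tree. -/
theorem stmt3 {V : Type*} (G : Type*) [Group G] [MulAction G V] (Γ : SimpleGraph V)
    (hact : ∀ (g : G) (u v : V), Γ.Adj u v → Γ.Adj (g • u) (g • v))
    (hconn : Γ.Connected)
    (i : V → V → ℕ)
    (hsymm : ∀ u v, i u v = i v u)
    (hzero : ∀ u v, i u v = 0 ↔ u = v)
    (hadj : ∀ u v, Γ.Adj u v ↔ u ≠ v ∧ i u v = 4)
    (htri : ∀ u v, Γ.Adj u v →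
      ∃! t : {t : Finset V // IsTriangle Γ t}, u ∈ t.1 ∧ v ∈ t.1)
    (hdesc : ∀ v w : V, v ≠ w → ¬Γ.Adj v w →
      ∃ u : V, Γ.Adj v u ∧ i u w < i v w ∧
        (∀ v', Γ.Adj v v' → v' ≠ u → i u w < i v' w) ∧
        (∀ v₁ v₂, Γ.Adj v v₁ → Γ.Adj v v₂ →
          i u w < i v₁ w → i v₁ w ≤ i v w →
          i u w < i v₂ w → i v₂ w ≤ i v w → v₁ = v₂) ∧
        (∀ v'', Γ.Adj v v'' → i u w < i v'' w → i v'' w ≤ i v w → Γ.Adj v'' u)) :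
    (Subdiv Γ).IsTree := by
  classical
  obtain ⟨vne⟩ := hconn.nonempty
  haveI : Nonempty (V ⊕ {t : Finset V // IsTriangle Γ t}) := ⟨Sum.inl vne⟩
  constructor
  · -- connectedness
    have R1 : ∀ u v : V, Γ.Adj u v → (Subdiv Γ).Reachable (Sum.inl u) (Sum.inl v) := by
      intro u v h
      obtain ⟨t, ⟨hu, hv⟩, -⟩ := htri u v h
      exact ⟨SimpleGraph.Walk.cons (Or.inl ⟨u, t, rfl, rfl, hu⟩)
        (SimpleGraph.Walk.cons (Or.inr ⟨v, t, rfl, rfl, hv⟩) SimpleGraph.Walk.nil)⟩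
    have R2 : ∀ u v : V, (Subdiv Γ).Reachable (Sum.inl u) (Sum.inl v) := by
      intro u v
      obtain ⟨p⟩ := hconn u v
      induction p with
      | nil => exact SimpleGraph.Reachable.refl _
      | cons h p ih => exact (R1 _ _ h).trans ih
    have R3 : ∀ t : {t : Finset V // IsTriangle Γ t},
        ∃ u, (Subdiv Γ).Reachable (Sum.inr t) (Sum.inl u) := by
      intro t
      have htne : t.1.Nonempty := by
        rw [← Finset.card_pos, t.2.1]; norm_num
      obtain ⟨u, hu⟩ := htne
      exact ⟨u, ⟨SimpleGraph.Walk.cons (Or.inr ⟨u, t, rfl, rfl, hu⟩) SimpleGraph.Walk.nil⟩⟩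
    refine SimpleGraph.Connected.mk ?_
    intro x y
    rcases x with ux | tx <;> rcases y with uy | ty
    · exact R2 _ _
    · obtain ⟨u, h⟩ := R3 ty
      exact (R2 ux u).trans h.symm
    · obtain ⟨u, h⟩ := R3 tx
      exact h.trans (R2 u uy)
    · obtain ⟨u, hu⟩ := R3 tx
      obtain ⟨u', hu'⟩ := R3 ty
      exact hu.trans ((R2 u u').trans hu'.symm)
  · -- acyclicity
    intro x c hc
    -- find an original vertex on the cycle
    have hbase : ∃ v0, Sum.inl v0 ∈ c.support := by
      cases c with
      | nil => exact absurd rfl hc.ne_nil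
      | @cons _ y _ h p =>
        rcases h with ⟨v', t, hx, hy, -⟩ | ⟨v', t, hx, hy, -⟩
        · subst hx
          exact ⟨v', by simp⟩
        · subst hy
          exact ⟨v', List.mem_cons_of_mem _ p.start_mem_support⟩
    obtain ⟨v0, hv0⟩ := hbase
    set c1 := c.rotate _ hv0 with hc1def
    have hc1 : c1.IsCycle := hc.rotate hv0
    set F : Finset V := (c1.support.filterMap Sum.getLeft?).toFinset with hFdef
    have hmemF : ∀ v : V, v ∈ F ↔ Sum.inl v ∈ c1.support := by
      intro v
      rw [hFdef, List.mem_toFinset, List.mem_filterMap]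
      constructor
      · rintro ⟨z, hz, hzv⟩
        rcases z with z | z
        · simp only [Sum.getLeft?] at hzv
          obtain rfl : z = v := by injection hzv
          exact hz
        · simp [Sum.getLeft?] at hzv
      · intro hmem
        exact ⟨Sum.inl v, hmem, rfl⟩
    refine core Γ i hzero hadj htri hdesc F
      ⟨v0, (hmemF v0).mpr (SimpleGraph.Walk.start_mem_support _)⟩ ?_
    intro v hv
    have hvs : Sum.inl v ∈ c1.support := (hmemF v).mp hv
    set c2 := c1.rotate _ hvs with hc2def
    have hc2 : c2.IsCycle := hc1.rotate hvs
    obtain ⟨a, ta, l1, hamem, hvna, hvta, hata, he1⟩ := extract_first c2 hc2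
    obtain ⟨b, tb, l2, hbmem, hvnb, hvtb, hbtb, he2⟩ :=
      extract_first c2.reverse (isCycle_reverse hc2)
    have hbmem' : Sum.inl b ∈ c2.support := by
      rwa [SimpleGraph.Walk.support_reverse, List.mem_reverse] at hbmem
    refine ⟨a, b, ta, tb,
      (hmemF a).mpr (mem_of_mem_rotate hvs hamem),
      (hmemF b).mpr (mem_of_mem_rotate hvs hbmem'),
      hvna, hvnb, ?_, hvta, hata, hvtb, hbtb⟩
    -- it remains to show ta ≠ tb
    intro hteq
    subst hteq
    rw [SimpleGraph.Walk.edges_reverse] at he2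
    have hrev : c2.edges = l2.reverse ++ [s(Sum.inl v, Sum.inr ta)] := by
      have := congrArg List.reverse he2
      simpa using this
    rw [he1] at hrev
    have hnd : (s(Sum.inl v, Sum.inr ta) :: l1).Nodup := he1 ▸ hc2.edges_nodup
    have h3l := hc2.three_le_length
    have hlen := SimpleGraph.Walk.length_edges c2
    rcases hm : l2.reverse with _ | ⟨z, zs⟩
    · rw [hm, List.nil_append] at hrev
      -- edges = [e], so length = 1
      have hl1 : l1 = [] := by injection hrev
      rw [hl1] at he1
      rw [he1] at hlen
      simp at hlen
      omega
    · rw [hm, List.cons_append] at hrev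
      have hl1 : l1 = zs ++ [s(Sum.inl v, Sum.inr ta)] := by injection hrev
      have : s(Sum.inl v, Sum.inr ta) ∈ l1 := by
        rw [hl1]; simp
      exact (List.nodup_cons.mp hnd).1 this
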